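/- Let X₁,…,Xₙ be points in a triangle T = T(y₁,y₂,y₃), with vertex regions R_M(y₁), R_M(y₂), R_M(y₃) determined by an interior point M. For each i with Xₙ ∩ R_M(yᵢ) nonempty, let X_{[i,1]} be a point of Xₙ ∩ R_M(yᵢ) minimizing distance to the edge eᵢ opposite yᵢ. Then Xₙ ∩ R_M(yᵢ) ⊆ N_PE^r(X_{[i,1]}, M) for each i, and consequently the domination number of the proportional-edge PCD on Xₙ is at most 3. -/

import Mathlib

open Set Metric RealInnerProductSpace

/-- The closed triangle with vertices given by the affine basis `b` of the plane. -/
noncomputable def Tri (b : AffineBasis (Fin 3) ℝ (EuclideanSpace ℝ (Fin 2))) :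
    Set (EuclideanSpace ℝ (Fin 2)) :=
  convexHull ℝ (Set.range ⇑b)

/-- The proportional-edge proximity region `N_PE^r(x)` for a point `x` whose vertex region
corresponds to the vertex `b i`: the image of the triangle under the homothety centered at
`b i` with ratio `r·(1 - b.coord i x)` (the triangle similar to `T` with vertex `b i` and
opposite edge at distance `r·d(b i, ℓ(b i,x))` from `b i`), intersected with the triangle. -/
noncomputable def NPE (b : AffineBasis (Fin 3) ℝ (EuclideanSpace ℝ (Fin 2)))
    (r : ℝ) (i : Fin 3) (x : EuclideanSpace ℝ (Fin 2)) :
    Set (EuclideanSpace ℝ (Fin 2)) :=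
  (AffineMap.homothety (b i) (r * (1 - b.coord i x)) '' Tri b) ∩ Tri b

/-- The domination number of the digraph on `Fin n` with adjacency relation `adj`:
the minimum cardinality of a set `S` such that every vertex `j` either belongs to `S`
or is the head of an arc from some `s ∈ S`. -/
noncomputable def domNum (n : ℕ) (adj : Fin n → Fin n → Prop) : ℕ :=
  sInf {k : ℕ | ∃ S : Finset (Fin n), S.card = k ∧ ∀ j, ∃ s ∈ S, s = j ∨ adj s j}

/-- Let `X₁,…,Xₙ` be points in the triangle `T`, with vertex regions encoded by the
assignment `v` (so `R_M(y_i) = v ⁻¹' {i}`).  For each `i` whose vertex region contains a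
sample point, let `sel i` select a sample point in that region at minimal distance to the
line of the edge `e_i` opposite `b i` (the zero set of the `i`-th barycentric coordinate).
Then all sample points of region `i` belong to `N_PE^r(X_{[i,1]}, M)`, and consequently
the domination number of the proportional-edge PCD is at most 3. -/
noncomputable abbrev EE := EuclideanSpace ℝ (Fin 2)

lemma infDist_coord (b : AffineBasis (Fin 3) ℝ EE) (i : Fin 3) :
    ∃ c : ℝ, 0 < c ∧ ∀ z, Metric.infDist z {w : EE | b.coord i w = 0} = c * |b.coord i z| := by
  set f := b.coord i with hf
  set L : EE →L[ℝ] ℝ := LinearMap.toContinuousLinearMap f.linear with hL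
  set u : EE := (InnerProductSpace.toDual ℝ EE).symm L with hu
  have hinner : ∀ w : EE, (inner ℝ u w : ℝ) = f.linear w := fun w => by
    simpa [hu, hL] using InnerProductSpace.toDual_symm_apply (𝕜 := ℝ) (E := EE) (y := L) (x := w)
  obtain ⟨j, hj⟩ : ∃ j : Fin 3, j ≠ i := by
    fin_cases i
    · exact ⟨1, by decide⟩
    · exact ⟨0, by decide⟩
    · exact ⟨0, by decide⟩
  have hfi : f (b i) = 1 := by simp [hf]
  have hfj : f (b j) = 0 := by simp [hf, b.coord_apply, hj.symm]
  have hune : u ≠ 0 := by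
    intro h0
    have h1 : f (b i) - f (b j) = f.linear (b i - b j) := by
      simpa using (f.linearMap_vsub (b i) (b j)).symm
    rw [← hinner, h0] at h1
    simp [hfi, hfj] at h1
  have hun : (0:ℝ) < ‖u‖ := norm_pos_iff.mpr hune
  refine ⟨‖u‖⁻¹, by positivity, fun z => ?_⟩
  have hSne : {w : EE | f w = 0}.Nonempty := ⟨b j, hfj⟩
  apply le_antisymm
  · set p : EE := z - (f z * (‖u‖^2)⁻¹) • u with hp
    have hLu : f.linear u = ‖u‖^2 := by rw [← hinner, real_inner_self_eq_norm_sq]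
    have hpz : p - z = -((f z * (‖u‖^2)⁻¹) • u) := by rw [hp]; abel
    have hfp : f p = f.linear (-((f z * (‖u‖^2)⁻¹) • u)) + f z := by
      rw [← hpz]
      have h := f.map_vadd' z (p - z)
      simpa [vadd_eq_add, sub_add_cancel] using h
    have hpS : p ∈ {w : EE | f w = 0} := by
      simp only [map_neg, map_smul, smul_eq_mul, hLu] at hfp
      show f p = 0
      rw [hfp]; field_simp; ring
    have hdist : dist z p = ‖u‖⁻¹ * |f z| := by
      rw [dist_eq_norm, hp]
      simp only [sub_sub_cancel, norm_smul, Real.norm_eq_abs, abs_mul, abs_inv, abs_pow, abs_norm]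
      rw [sq]
      field_simp
    calc Metric.infDist z {w : EE | f w = 0} ≤ dist z p := Metric.infDist_le_dist_of_mem hpS
    _ = ‖u‖⁻¹ * |f z| := hdist
  · rw [Metric.infDist_eq_iInf]
    have : Nonempty ({w : EE | f w = 0} : Set EE) := ⟨⟨b j, hfj⟩⟩
    apply le_ciInf
    rintro ⟨w, hw⟩
    simp only
    have h1 : |f z| = |(inner ℝ u (z-w) : ℝ)| := by
      rw [hinner]
      have h3 : f.linear (z - w) = f z - f w := by simpa using f.linearMap_vsub z w
      rw [h3, hw, sub_zero]
    have h2 : |(inner ℝ u (z-w) : ℝ)| ≤ ‖u‖ * ‖z - w‖ := abs_real_inner_le_norm u (z - w)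
    rw [dist_eq_norm, inv_mul_le_iff₀ hun]
    calc |f z| = |(inner ℝ u (z-w) : ℝ)| := h1
    _ ≤ ‖u‖ * ‖z - w‖ := h2

lemma coord_nonneg_of_mem {b : AffineBasis (Fin 3) ℝ EE} {z : EE} (hz : z ∈ Tri b) (j : Fin 3) :
    0 ≤ b.coord j z := by
  rw [Tri, b.convexHull_eq_nonneg_coord] at hz; exact hz j

lemma coord_le_one_of_mem {b : AffineBasis (Fin 3) ℝ EE} {z : EE} (hz : z ∈ Tri b) (i : Fin 3) :
    b.coord i z ≤ 1 := by
  have hsum := b.sum_coord_apply_eq_one z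
  have h1 : ∑ l ∈ Finset.univ.erase i, b.coord l z = 1 - b.coord i z := by
    rw [Finset.sum_erase_eq_sub (Finset.mem_univ i), hsum]
  have h2 : (0:ℝ) ≤ ∑ l ∈ Finset.univ.erase i, b.coord l z :=
    Finset.sum_nonneg fun l _ => coord_nonneg_of_mem hz l
  linarith

lemma mem_NPE (b : AffineBasis (Fin 3) ℝ EE) (r : ℝ) (hr : 1 ≤ r) (i : Fin 3)
    (x y : EE) (hx : x ∈ Tri b) (hy : y ∈ Tri b)
    (hxy : b.coord i x ≤ b.coord i y) : y ∈ NPE b r i x := by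
  set k := r * (1 - b.coord i x) with hk
  have hx1 : b.coord i x ≤ 1 := coord_le_one_of_mem hx i
  have hk0 : 1 - b.coord i x ≤ k := by nlinarith
  have hknn : 0 ≤ k := le_trans (by linarith) hk0
  refine ⟨?_, hy⟩
  rcases eq_or_lt_of_le hknn with hk0' | hkpos
  · -- degenerate case k = 0 : then coord i x = 1 and y = b i
    have hxi : b.coord i x = 1 := by nlinarith
    have hyi : b.coord i y = 1 := le_antisymm (coord_le_one_of_mem hy i) (by linarith)
    have hybi : y = b i := by
      apply b.ext_elem
      intro j
      by_cases hji : j = i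
      · subst hji; simp [hyi, b.coord_apply]
      · have hsum := b.sum_coord_apply_eq_one y
        have h1 : b.coord j y ≤ ∑ l ∈ Finset.univ.erase i, b.coord l y :=
          Finset.single_le_sum (fun l _ => coord_nonneg_of_mem hy l)
            (Finset.mem_erase.mpr ⟨hji, Finset.mem_univ j⟩)
        have h2 : ∑ l ∈ Finset.univ.erase i, b.coord l y = 1 - b.coord i y := by
          rw [Finset.sum_erase_eq_sub (Finset.mem_univ i), hsum]
        have h3 := coord_nonneg_of_mem hy j
        have h4 : b.coord j y = 0 := by rw [h2, hyi] at h1; linarith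
        simp [h4, b.coord_apply, hji]
    have hke : r * (1 - b.coord i x) = 0 := by rw [← hk, ← hk0']
    refine ⟨y, hy, ?_⟩
    rw [hke, AffineMap.homothety_apply]
    simp [hybi]
  · refine ⟨AffineMap.homothety (b i) k⁻¹ y, ?_, ?_⟩
    · rw [Tri, b.convexHull_eq_nonneg_coord]
      intro j
      have hcw : b.coord j (AffineMap.homothety (b i) k⁻¹ y)
          = b.coord j (b i) + k⁻¹ * (b.coord j y - b.coord j (b i)) := by
        rw [AffineMap.homothety_eq_lineMap, AffineMap.apply_lineMap, AffineMap.lineMap_apply]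
        simp [vadd_eq_add, smul_eq_mul]
        ring
      rw [hcw]
      by_cases hji : j = i
      · subst hji
        have hbj : b.coord j (b j) = 1 := by simp
        rw [hbj]
        have hty : b.coord j y ≤ 1 := coord_le_one_of_mem hy j
        have h5 : 1 - b.coord j y ≤ k := le_trans (by linarith) hk0
        have h6 : k⁻¹ * (1 - b.coord j y) ≤ 1 := by
          rw [inv_mul_le_iff₀ hkpos]; linarith
        nlinarith
      · have h0 : b.coord j (b i) = 0 := by simp [b.coord_apply, hji]
        rw [h0, sub_zero, zero_add]
        have := coord_nonneg_of_mem hy j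
        positivity
    · rw [← AffineMap.homothety_mul_apply, mul_inv_cancel₀ (ne_of_gt hkpos),
        AffineMap.homothety_apply]
      simp

theorem closest_to_edge_dominates_region_and_domNum_le_three
    (b : AffineBasis (Fin 3) ℝ (EuclideanSpace ℝ (Fin 2)))
    (v : EuclideanSpace ℝ (Fin 2) → Fin 3)
    (r : ℝ) (hr : 1 ≤ r)
    (n : ℕ) (X : Fin n → EuclideanSpace ℝ (Fin 2)) (hX : ∀ j, X j ∈ Tri b)
    (sel : Fin 3 → Fin n)
    (hsel : ∀ i, (∃ j, v (X j) = i) →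
      v (X (sel i)) = i ∧
      ∀ j, v (X j) = i →
        Metric.infDist (X (sel i)) {z | b.coord i z = 0} ≤
          Metric.infDist (X j) {z | b.coord i z = 0}) :
    (∀ i, (∃ j, v (X j) = i) → ∀ j, v (X j) = i → X j ∈ NPE b r i (X (sel i))) ∧
    domNum n (fun s j => X j ∈ NPE b r (v (X s)) (X s)) ≤ 3 := by
  have part1 : ∀ i, (∃ j, v (X j) = i) → ∀ j, v (X j) = i → X j ∈ NPE b r i (X (sel i)) := by
    intro i hex j hj
    obtain ⟨hv, hmin⟩ := hsel i hex
    have hd := hmin j hj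
    obtain ⟨c, hc, hform⟩ := infDist_coord b i
    rw [hform, hform] at hd
    have habs : |b.coord i (X (sel i))| ≤ |b.coord i (X j)| :=
      le_of_mul_le_mul_left (by linarith [hd]) hc
    have h1 : b.coord i (X (sel i)) ≤ b.coord i (X j) := by
      rw [abs_of_nonneg (coord_nonneg_of_mem (hX (sel i)) i),
        abs_of_nonneg (coord_nonneg_of_mem (hX j) i)] at habs
      exact habs
    exact mem_NPE b r hr i (X (sel i)) (X j) (hX (sel i)) (hX j) h1
  refine ⟨part1, ?_⟩
  set S : Finset (Fin n) := Finset.image sel Finset.univ with hS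
  have hScard : S.card ≤ 3 := le_trans (Finset.card_image_le) (by simp)
  have hmem : S.card ∈ {k : ℕ | ∃ S : Finset (Fin n), S.card = k ∧
      ∀ j, ∃ s ∈ S, s = j ∨ X j ∈ NPE b r (v (X s)) (X s)} := by
    refine ⟨S, rfl, fun j => ?_⟩
    refine ⟨sel (v (X j)), Finset.mem_image_of_mem sel (Finset.mem_univ _), Or.inr ?_⟩
    obtain ⟨hv, -⟩ := hsel (v (X j)) ⟨j, rfl⟩
    rw [hv]
    exact part1 (v (X j)) ⟨j, rfl⟩ j rfl
  calc domNum n _ ≤ S.card := Nat.sInf_le hmem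
  _ ≤ 3 := hScard
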